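/- For every classical propositional formula α whose propositional symbols are contained in {B_1,…,B_n}, Prob(α) = #{v : B_α → {0,1} : v ⊨ α} / 2^{|B_α|}; consequently Prob(α) = 1 if and only if α is a tautology. (This is the semantic core of the conservativeness result: in the uniform quantum structure, the probability of α equals 1 exactly when α is classically valid.) -/

import Mathlib

open scoped InnerProductSpace

noncomputable section

/-- Classical propositional formulas, built from propositional symbols `B_j` (`j : ℕ`)
and `⊤` using `¬` and `→`. -/
inductive PropForm : Type
  | verum : PropForm
  | var : ℕ → PropForm
  | neg : PropForm → PropForm
  | imp : PropForm → PropForm → PropForm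

namespace PropForm

/-- The (finite) set of propositional symbols occurring in a formula. -/
def symbols : PropForm → Finset ℕ
  | verum => ∅
  | var n => {n}
  | neg a => a.symbols
  | imp a b => a.symbols ∪ b.symbols

/-- Truth-table evaluation of a formula under a (total) assignment of truth values. -/
def eval (w : ℕ → Bool) : PropForm → Bool
  | verum => true
  | var n => w n
  | neg a => !(a.eval w)
  | imp a b => !(a.eval w) || b.eval w

end PropForm

/-- A valuation `v` on a set `A` of propositional symbols (with `A ⊇ B_α`) satisfies `α`. -/
def Sat (A : Finset ℕ) (v : {k // k ∈ A} → Bool) (α : PropForm) : Prop :=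
  PropForm.eval (fun k => if h : k ∈ A then v ⟨k, h⟩ else false) α = true

instance (A : Finset ℕ) (α : PropForm) : DecidablePred (fun v => Sat A v α) := fun _ => by
  unfold Sat; infer_instance

variable {H : Type*} [NormedAddCommGroup H] [InnerProductSpace ℂ H] [CompleteSpace H]

/-- The rank-one operator `|x⟩⟨y| : z ↦ ⟨y, z⟩ • x`. -/
def ketbra (x y : H) : H →L[ℂ] H :=
  (innerSL ℂ y).smulRight x

/-- The orthogonal projection `Q_j = Σ_{v : v(j)=1} |u_v⟩⟨u_v|`. -/
def Qop (n : ℕ) (u : (Fin n → Bool) → H) (j : Fin n) : H →L[ℂ] H :=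
  ∑ v ∈ Finset.univ.filter (fun v : Fin n → Bool => v j = true), ketbra (u v) (u v)

/-- The uniform state `ψ = Σ_v 2^{-n/2}·u_v`. -/
def psiUnif (n : ℕ) (u : (Fin n → Bool) → H) : H :=
  ∑ v : Fin n → Bool, ((Real.sqrt (2 ^ n) : ℂ))⁻¹ • u v

/-- The probability of the classical formula `α` in the uniform state `ψ`:
the sum, over valuations `v` on `B_α` satisfying `α`, of
`Re ⟪ψ, T_{j_k}^v(⋯ (T_{j_1}^v ψ) ⋯)⟫` where `B_α = {j_1 < … < j_k}` and
`T_j^v = Q_j` when `v(j) = 1` and `T_j^v = id − Q_j` otherwise. -/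
def ProbU (n : ℕ) (u : (Fin n → Bool) → H) (α : PropForm) : ℝ :=
  ∑ v ∈ Finset.univ.filter (fun v : {k // k ∈ α.symbols} → Bool => Sat α.symbols v α),
    (⟪psiUnif n u, (α.symbols.sort (· ≤ ·)).foldl
        (fun x s => if hs : s ∈ α.symbols then
            if hsn : s < n then
              (if v ⟨s, hs⟩ then Qop n u ⟨s, hsn⟩ x else x - Qop n u ⟨s, hsn⟩ x)
            else x
          else x) (psiUnif n u)⟫_ℂ).re


section AuxLemmas

variable {H : Type*} [NormedAddCommGroup H] [InnerProductSpace ℂ H] [CompleteSpace H]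

lemma ketbra_apply' (x y z : H) : ketbra x y z = ⟪y, z⟫_ℂ • x := rfl

lemma Qop_apply_u (n : ℕ) (u : (Fin n → Bool) → H) (hon : Orthonormal ℂ u)
    (j : Fin n) (w : Fin n → Bool) :
    Qop n u j (u w) = if w j = true then u w else 0 := by
  rw [orthonormal_iff_ite] at hon
  simp only [Qop, ContinuousLinearMap.sum_apply, ketbra_apply', hon]
  rw [Finset.sum_congr rfl (fun v _ => by
    rw [show (if v = w then (1:ℂ) else 0) • u v = if v = w then u w else 0 by
      split <;> simp_all])]
  rw [Finset.sum_ite_eq' _ w (fun _ => u w)]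
  simp

lemma Qop_apply_sum (n : ℕ) (u : (Fin n → Bool) → H) (hon : Orthonormal ℂ u)
    (j : Fin n) (S : Finset (Fin n → Bool)) (c : ℂ) :
    Qop n u j (∑ w ∈ S, c • u w) = ∑ w ∈ S.filter (fun w => w j = true), c • u w := by
  rw [map_sum, Finset.sum_filter]
  refine Finset.sum_congr rfl (fun w _ => ?_)
  rw [map_smul, Qop_apply_u n u hon j w]
  split <;> simp

lemma count_agree (n : ℕ) (T : Finset (Fin n)) (f : Fin n → Bool) :
    (Finset.univ.filter (fun w : Fin n → Bool => ∀ i ∈ T, w i = f i)).card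
      = 2 ^ (n - T.card) := by
  classical
  have e : {w : Fin n → Bool // ∀ i ∈ T, w i = f i} ≃ ({i : Fin n // i ∉ T} → Bool) :=
    { toFun := fun w i => w.1 i.1
      invFun := fun g => ⟨fun i => if h : i ∈ T then f i else g ⟨i, h⟩,
        fun i hi => by simp [hi]⟩
      left_inv := fun w => by
        ext i
        by_cases h : i ∈ T
        · simp [h, w.2 i h]
        · simp [h]
      right_inv := fun g => by
        ext i
        simp [i.2] }
  have h1 : Fintype.card {w : Fin n → Bool // ∀ i ∈ T, w i = f i} = 2 ^ (n - T.card) := by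
    rw [Fintype.card_congr e, Fintype.card_fun, Fintype.card_bool]
    have h2 : Fintype.card {i : Fin n // i ∉ T} = n - T.card := by
      rw [Fintype.card_subtype]
      have h3 : Finset.univ.filter (fun i : Fin n => i ∉ T) = Tᶜ := by
        ext i; simp [Finset.mem_compl]
      rw [h3, Finset.card_compl, Fintype.card_fin]
    rw [h2]
  rw [← h1, Fintype.card_subtype]

lemma inner_psi_sum (n : ℕ) (u : (Fin n → Bool) → H) (hon : Orthonormal ℂ u)
    (S : Finset (Fin n → Bool)) :
    ⟪psiUnif n u, ∑ w ∈ S, ((Real.sqrt (2 ^ n) : ℂ))⁻¹ • u w⟫_ℂ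
      = (((S.card : ℝ) * ((2 : ℝ) ^ n)⁻¹ : ℝ) : ℂ) := by
  classical
  have hon' := orthonormal_iff_ite.mp hon
  have h2 : (0:ℝ) ≤ 2 ^ n := by positivity
  set c : ℂ := ((Real.sqrt (2 ^ n) : ℂ))⁻¹ with hc
  have hone : ∀ w, ⟪psiUnif n u, u w⟫_ℂ = (starRingEnd ℂ) c := by
    intro w
    unfold psiUnif
    rw [sum_inner]
    simp only [inner_smul_left, hon', mul_ite, mul_one, mul_zero, ← hc]
    rw [Finset.sum_ite_eq' Finset.univ w (fun _ => (starRingEnd ℂ) c)]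
    simp
  rw [inner_sum]
  simp only [inner_smul_right, hone]
  rw [Finset.sum_const, nsmul_eq_mul]
  have hcc : c * (starRingEnd ℂ) c = ((((2:ℝ) ^ n)⁻¹ : ℝ) : ℂ) := by
    rw [hc, map_inv₀, Complex.conj_ofReal, ← mul_inv, ← Complex.ofReal_mul,
      Real.mul_self_sqrt h2, Complex.ofReal_inv]
  rw [hcc]
  push_cast
  ring


end AuxLemmas

/-- In the uniform quantum structure, for a formula `α` with symbols among `B_1, …, B_n`,
`Prob(α) = #{v : B_α → {0,1} : v ⊨ α} / 2^{|B_α|}`; consequently `Prob(α) = 1` iff `α` is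
a tautology. -/


theorem stmt12 (n : ℕ) (hn : 1 ≤ n) (u : (Fin n → Bool) → H)
    (hon : Orthonormal ℂ u)
    (htot : (Submodule.span ℂ (Set.range u)).topologicalClosure = ⊤)
    (α : PropForm) (hsym : ∀ s ∈ α.symbols, s < n) :
    ProbU n u α =
      ((Finset.univ.filter
          (fun v : {k // k ∈ α.symbols} → Bool => Sat α.symbols v α)).card : ℝ) /
        2 ^ α.symbols.card ∧
    (ProbU n u α = 1 ↔ ∀ v : {k // k ∈ α.symbols} → Bool, Sat α.symbols v α) := by
  classical
  set A := α.symbols with hA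
  set k := A.card with hk
  set c : ℂ := ((Real.sqrt (2 ^ n) : ℂ))⁻¹ with hc
  set step := fun (v : {k // k ∈ A} → Bool) (x : H) (s : ℕ) =>
      if hs : s ∈ A then
        if hsn : s < n then
          (if v ⟨s, hs⟩ then Qop n u ⟨s, hsn⟩ x else x - Qop n u ⟨s, hsn⟩ x)
        else x
      else x with hstep
  -- key fold computation
  have key : ∀ (v : {k // k ∈ A} → Bool) (L : List ℕ) (S : Finset (Fin n → Bool)),
      L.foldl (step v) (∑ w ∈ S, c • u w)
        = ∑ w ∈ S.filter (fun w => ∀ s, ∀ hs : s ∈ A, s ∈ L → w ⟨s, hsym s hs⟩ = v ⟨s, hs⟩),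
            c • u w := by
    intro v L
    induction L with
    | nil =>
      intro S
      simp
    | cons a L ih =>
      intro S
      rw [List.foldl_cons]
      have hsplit : ∀ (S' : Finset (Fin n → Bool)),
          S'.filter (fun w => ∀ s, ∀ hs : s ∈ A, s ∈ a :: L → w ⟨s, hsym s hs⟩ = v ⟨s, hs⟩)
            = (S'.filter (fun w => ∀ ha : a ∈ A, w ⟨a, hsym a ha⟩ = v ⟨a, ha⟩)).filter
                (fun w => ∀ s, ∀ hs : s ∈ A, s ∈ L → w ⟨s, hsym s hs⟩ = v ⟨s, hs⟩) := by
        intro S'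
        rw [Finset.filter_filter]
        apply Finset.filter_congr
        intro w _
        constructor
        · intro h
          exact ⟨fun ha => h a ha List.mem_cons_self, fun s hs hsL => h s hs (List.mem_cons_of_mem _ hsL)⟩
        · rintro ⟨h1, h2⟩ s hs hsL
          rcases List.mem_cons.mp hsL with rfl | hsL
          · exact h1 hs
          · exact h2 s hs hsL
      by_cases ha : a ∈ A
      · have han : a < n := hsym a ha
        have hfa : S.filter (fun w => ∀ ha' : a ∈ A, w ⟨a, hsym a ha'⟩ = v ⟨a, ha'⟩)
            = S.filter (fun w => w ⟨a, han⟩ = v ⟨a, ha⟩) := by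
          apply Finset.filter_congr
          intro w _
          constructor
          · intro h; exact h ha
          · intro h ha'; exact h
        by_cases hv : v ⟨a, ha⟩
        · have : step v (∑ w ∈ S, c • u w) a
              = ∑ w ∈ S.filter (fun w => w ⟨a, han⟩ = v ⟨a, ha⟩), c • u w := by
            rw [hstep]
            simp only [ha, han, hv, dif_pos, if_true]
            rw [Qop_apply_sum n u hon ⟨a, han⟩ S c]
          rw [this, ih, hsplit, hfa]
        · have hv' : v ⟨a, ha⟩ = false := by simp_all
          have : step v (∑ w ∈ S, c • u w) a
              = ∑ w ∈ S.filter (fun w => w ⟨a, han⟩ = v ⟨a, ha⟩), c • u w := by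
            rw [hstep]
            simp only [ha, han, hv', dif_pos, if_false, Bool.false_eq_true]
            rw [Qop_apply_sum n u hon ⟨a, han⟩ S c]
            have hsum := Finset.sum_filter_add_sum_filter_not S
              (fun w => w ⟨a, han⟩ = true) (fun w => c • u w)
            have hfeq : S.filter (fun w => ¬ (w ⟨a, han⟩ = true))
                = S.filter (fun w => w ⟨a, han⟩ = false) := by
              apply Finset.filter_congr
              intro w _
              simp
            rw [← hfeq, ← hsum, add_sub_cancel_left]
          rw [this, ih, hsplit, hfa]
      · have hfa : S.filter (fun w => ∀ ha' : a ∈ A, w ⟨a, hsym a ha'⟩ = v ⟨a, ha'⟩) = S := by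
          apply Finset.filter_true_of_mem
          intro w _ ha'
          exact absurd ha' ha
        have hstepa : step v (∑ w ∈ S, c • u w) a = ∑ w ∈ S, c • u w := by
          rw [hstep]; simp [ha]
        rw [hstepa, ih, hsplit, hfa]
  -- cardinality of matching sets
  have hkn : k ≤ n := by
    calc k = (A.attachFin hsym).card := (Finset.card_attachFin _ _).symm
      _ ≤ (Finset.univ : Finset (Fin n)).card := Finset.card_le_univ _
      _ = n := by simp
  have hMc : ∀ v : {k // k ∈ A} → Bool,
      (Finset.univ.filter (fun w : Fin n → Bool =>
        ∀ s, ∀ hs : s ∈ A, s ∈ A.sort (· ≤ ·) → w ⟨s, hsym s hs⟩ = v ⟨s, hs⟩)).card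
        = 2 ^ (n - k) := by
    intro v
    have hfe : Finset.univ.filter (fun w : Fin n → Bool =>
          ∀ s, ∀ hs : s ∈ A, s ∈ A.sort (· ≤ ·) → w ⟨s, hsym s hs⟩ = v ⟨s, hs⟩)
        = Finset.univ.filter (fun w : Fin n → Bool => ∀ i ∈ A.attachFin hsym,
            w i = if h : (i : ℕ) ∈ A then v ⟨i, h⟩ else false) := by
      apply Finset.filter_congr
      intro w _
      constructor
      · intro h i hi
        have hiA : (i : ℕ) ∈ A := Finset.mem_attachFin hsym |>.mp hi
        rw [dif_pos hiA]
        exact h i.1 hiA ((Finset.mem_sort _).mpr hiA)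
      · intro h s hs _
        have hi : (⟨s, hsym s hs⟩ : Fin n) ∈ A.attachFin hsym :=
          (Finset.mem_attachFin hsym).mpr hs
        have := h ⟨s, hsym s hs⟩ hi
        rwa [dif_pos hs] at this
    rw [hfe, count_agree, Finset.card_attachFin]
  -- per-valuation term
  have hpsi : psiUnif n u = ∑ w ∈ Finset.univ, c • u w := rfl
  have hterm : ∀ v : {k // k ∈ A} → Bool,
      (⟪psiUnif n u, (A.sort (· ≤ ·)).foldl (step v) (psiUnif n u)⟫_ℂ).re
        = ((2 : ℝ) ^ k)⁻¹ := by
    intro v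
    have hfold : (A.sort (· ≤ ·)).foldl (step v) (psiUnif n u)
        = ∑ w ∈ Finset.univ.filter (fun w : Fin n → Bool =>
            ∀ s, ∀ hs : s ∈ A, s ∈ A.sort (· ≤ ·) → w ⟨s, hsym s hs⟩ = v ⟨s, hs⟩),
              c • u w := by
      rw [hpsi]; exact key v _ Finset.univ
    rw [hfold, hc, inner_psi_sum n u hon, Complex.ofReal_re, hMc v]
    push_cast
    have hpow : (2:ℝ) ^ (n - k) * (2:ℝ) ^ k = (2:ℝ) ^ n := pow_sub_mul_pow (2:ℝ) hkn
    rw [← hpow, mul_inv, ← mul_assoc, mul_inv_cancel₀ (by positivity), one_mul]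
  -- assemble
  have hPU : ProbU n u α
      = ∑ v ∈ Finset.univ.filter (fun v : {k // k ∈ A} → Bool => Sat A v α),
          (⟪psiUnif n u, (A.sort (· ≤ ·)).foldl (step v) (psiUnif n u)⟫_ℂ).re := rfl
  have hpart1 : ProbU n u α =
      ((Finset.univ.filter
          (fun v : {k // k ∈ α.symbols} → Bool => Sat α.symbols v α)).card : ℝ) /
        2 ^ α.symbols.card := by
    rw [hPU, Finset.sum_congr rfl (fun v _ => hterm v), Finset.sum_const, nsmul_eq_mul,
      ← hA, ← hk]
    rw [div_eq_mul_inv]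
  have hcu : Fintype.card ({k // k ∈ A} → Bool) = 2 ^ k := by
    rw [Fintype.card_fun, Fintype.card_bool, hk]
    congr 1
    exact Fintype.card_coe A
  refine ⟨hpart1, ?_⟩
  rw [hpart1, ← hA, ← hk, div_eq_one_iff_eq (by positivity)]
  constructor
  · intro h
    have h2 : (Finset.univ.filter (fun v : {k // k ∈ A} → Bool => Sat A v α)).card
        = 2 ^ k := by exact_mod_cast h
    have h3 := Finset.eq_univ_of_card _ (h2.trans hcu.symm)
    intro v
    have := Finset.eq_univ_iff_forall.mp h3 v
    exact (Finset.mem_filter.mp this).2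
  · intro h
    have h3 : Finset.univ.filter (fun v : {k // k ∈ A} → Bool => Sat A v α)
        = Finset.univ := Finset.filter_true_of_mem (fun v _ => h v)
    rw [h3, Finset.card_univ, hcu]
    push_cast
    ring


end
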